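/- The polynomial t⁴ + 4t³y + 16t²y² + 24ty³ + 16y⁴ is irreducible in ℚ[t, y], and likewise t⁴ + 2t³y + 4t²y² - 8ty³ - 16y⁴ is irreducible in ℚ[t, y]. -/

import Mathlib

section Aux
open Polynomial

theorem aux_eq_quad {K : Type*} [CommRing K] (p : K[X]) (h : p.natDegree ≤ 2) :
    p = C (p.coeff 2) * X ^ 2 + C (p.coeff 1) * X + C (p.coeff 0) := by
  conv_lhs => rw [p.as_sum_range' 3 (by omega)]
  rw [Finset.sum_range_succ, Finset.sum_range_succ, Finset.sum_range_succ,
    Finset.sum_range_zero]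
  simp only [← C_mul_X_pow_eq_monomial, pow_zero, pow_one, mul_one]
  ring

theorem aux_irred_quartic (f : (ZMod 3)[X]) (hm : f.Monic) (hd : f.natDegree = 4)
    (h1 : ∀ x : ZMod 3, f.eval x ≠ 0)
    (h2 : ∀ a b c d : ZMod 3,
      ¬ (a + c = f.coeff 3 ∧ d + a * c + b = f.coeff 2 ∧
         a * d + b * c = f.coeff 1 ∧ b * d = f.coeff 0)) :
    Irreducible f := by
  have hf0 : f ≠ 0 := hm.ne_zero
  have noroot : ∀ k : (ZMod 3)[X], k ∣ f → k.natDegree ≠ 1 := by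
    intro k hk hk1
    have hk10 : k.coeff 1 ≠ 0 := by
      have hkne : k ≠ 0 := by intro h0; rw [h0] at hk1; simp at hk1
      have := leadingCoeff_ne_zero.mpr hkne
      rwa [leadingCoeff, hk1] at this
    obtain ⟨m, hmf⟩ := hk
    apply h1 (-(k.coeff 0) / k.coeff 1)
    have hk' : k.eval (-(k.coeff 0) / k.coeff 1) = 0 := by
      conv_lhs => rw [eq_X_add_C_of_natDegree_le_one hk1.le]
      simp only [eval_add, eval_mul, eval_C, eval_X]
      simp only [coeff_add, coeff_C_mul, coeff_X_zero, coeff_X_one, coeff_C_zero, coeff_C,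
        one_ne_zero, if_false, if_true, mul_zero, mul_one, zero_add, add_zero]
      field_simp
      ring
    rw [hmf, eval_mul, hk', zero_mul]
  constructor
  · intro hu
    have := natDegree_eq_zero_of_isUnit hu
    omega
  · intro g h hgh
    have hg0 : g ≠ 0 := fun h0 => hf0 (by rw [hgh, h0, zero_mul])
    have hh0 : h ≠ 0 := fun h0 => hf0 (by rw [hgh, h0, mul_zero])
    have hdeg : g.natDegree + h.natDegree = 4 := by
      rw [← hd, hgh, natDegree_mul hg0 hh0]
    have unit_of_deg0 : ∀ k : (ZMod 3)[X], k ≠ 0 → k.natDegree = 0 → IsUnit k := by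
      intro k k0 kd
      have hc : k.coeff 0 ≠ 0 := by
        intro hc
        exact k0 (by rw [eq_C_of_natDegree_eq_zero kd, hc, map_zero])
      rw [eq_C_of_natDegree_eq_zero kd]
      exact isUnit_C.mpr (isUnit_iff_ne_zero.mpr hc)
    have hgd : g ∣ f := ⟨h, hgh⟩
    have hhd : h ∣ f := ⟨g, by rw [hgh, mul_comm]⟩
    rcases (show g.natDegree = 0 ∨ g.natDegree = 2 ∨ h.natDegree = 0 ∨
        g.natDegree = 1 ∨ h.natDegree = 1 by omega) with h0 | hq | h0 | hl | hl
    · exact Or.inl (unit_of_deg0 g hg0 h0)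
    · exfalso
      have hhq : h.natDegree = 2 := by omega
      have hlc : g.leadingCoeff * h.leadingCoeff = 1 := by
        rw [← leadingCoeff_mul, ← hgh, hm.leadingCoeff]
      have hvu : h.leadingCoeff * g.leadingCoeff = 1 := by rw [mul_comm]; exact hlc
      set u := g.leadingCoeff with hu
      set v := h.leadingCoeff with hv
      set g' := C v * g with hg'
      set h' := C u * h with hh'
      have hone : C v * C u = (1 : (ZMod 3)[X]) := by rw [← C_mul, hvu, map_one]
      have hf' : f = g' * h' := by
        rw [hg', hh', hgh,
          show C v * g * (C u * h) = C v * C u * (g * h) from by ring, hone, one_mul]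
      have hg'm : g'.Monic := by
        show g'.leadingCoeff = 1
        rw [hg', leadingCoeff_mul, leadingCoeff_C]
        exact hvu
      have hh'm : h'.Monic := by
        show h'.leadingCoeff = 1
        rw [hh', leadingCoeff_mul, leadingCoeff_C]
        exact hlc
      have hg'd : g'.natDegree = 2 := by
        rw [hg', natDegree_C_mul_eq_of_mul_eq_one hlc]
        exact hq
      have hh'd : h'.natDegree = 2 := by
        rw [hh', natDegree_C_mul_eq_of_mul_eq_one hvu]
        exact hhq
      have hg'c : g'.coeff 2 = 1 := by
        have := hg'm.coeff_natDegree
        rwa [hg'd] at this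
      have hh'c : h'.coeff 2 = 1 := by
        have := hh'm.coeff_natDegree
        rwa [hh'd] at this
      have hgq : g' = X ^ 2 + C (g'.coeff 1) * X + C (g'.coeff 0) := by
        have := aux_eq_quad g' hg'd.le
        rwa [hg'c, map_one, one_mul] at this
      have hhq2 : h' = X ^ 2 + C (h'.coeff 1) * X + C (h'.coeff 0) := by
        have := aux_eq_quad h' hh'd.le
        rwa [hh'c, map_one, one_mul] at this
      obtain ⟨a, b, hab⟩ : ∃ a b : ZMod 3, g' = X ^ 2 + C a * X + C b := ⟨_, _, hgq⟩
      obtain ⟨c, d, hcd⟩ : ∃ c d : ZMod 3, h' = X ^ 2 + C c * X + C d := ⟨_, _, hhq2⟩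
      have hexp : f = X ^ 4 + C (a + c) * X ^ 3 + C (d + a * c + b) * X ^ 2
          + C (a * d + b * c) * X + C (b * d) := by
        rw [hf', hab, hcd]
        simp only [C_add, C_mul]
        ring
      apply h2 a b c d
      refine ⟨?_, ?_, ?_, ?_⟩ <;> rw [hexp] <;>
        simp [coeff_add, coeff_C_mul, coeff_X_pow, coeff_C, coeff_X, add_mul, mul_assoc]
    · exact Or.inr (unit_of_deg0 h hh0 h0)
    · exact absurd hl (noroot g hgd)
    · exact absurd hl (noroot h hhd)


theorem aux_f3a_irred :
    Irreducible (X ^ 4 + C 4 * X ^ 3 + C 16 * X ^ 2 + C 24 * X + C 16 : (ZMod 3)[X]) := by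
  apply aux_irred_quartic
  · monicity!
  · compute_degree!
  · intro x
    simp only [eval_add, eval_mul, eval_pow, eval_C, eval_X]
    revert x
    decide
  · simp only [coeff_add, coeff_C_mul, coeff_X_pow, coeff_C, coeff_X]
    norm_num
    decide

theorem aux_f3b_irred :
    Irreducible (X ^ 4 + C 2 * X ^ 3 + C 4 * X ^ 2 - C 8 * X - C 16 : (ZMod 3)[X]) := by
  apply aux_irred_quartic
  · monicity!
  · compute_degree!
  · intro x
    simp only [eval_sub, eval_add, eval_mul, eval_pow, eval_C, eval_X]
    revert x
    decide
  · simp only [coeff_sub, coeff_add, coeff_C_mul, coeff_X_pow, coeff_C, coeff_X]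
    norm_num
    decide

theorem aux_qZ1_irred :
    Irreducible (X ^ 4 + C 4 * X ^ 3 + C 16 * X ^ 2 + C 24 * X + C 16 : ℤ[X]) := by
  apply Polynomial.Monic.irreducible_of_irreducible_map (Int.castRingHom (ZMod 3))
  · monicity!
  · have hmap : (X ^ 4 + C 4 * X ^ 3 + C 16 * X ^ 2 + C 24 * X + C 16 : ℤ[X]).map
        (Int.castRingHom (ZMod 3))
        = (X ^ 4 + C 4 * X ^ 3 + C 16 * X ^ 2 + C 24 * X + C 16 : (ZMod 3)[X]) := by
      simp only [Polynomial.map_add, Polynomial.map_mul, Polynomial.map_pow,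
        Polynomial.map_C, Polynomial.map_X, map_ofNat, Polynomial.map_ofNat]
    rw [hmap]
    exact aux_f3a_irred

theorem aux_qZ2_irred :
    Irreducible (X ^ 4 + C 2 * X ^ 3 + C 4 * X ^ 2 - C 8 * X - C 16 : ℤ[X]) := by
  apply Polynomial.Monic.irreducible_of_irreducible_map (Int.castRingHom (ZMod 3))
  · monicity!
  · have hmap : (X ^ 4 + C 2 * X ^ 3 + C 4 * X ^ 2 - C 8 * X - C 16 : ℤ[X]).map
        (Int.castRingHom (ZMod 3))
        = (X ^ 4 + C 2 * X ^ 3 + C 4 * X ^ 2 - C 8 * X - C 16 : (ZMod 3)[X]) := by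
      simp only [Polynomial.map_sub, Polynomial.map_add, Polynomial.map_mul, Polynomial.map_pow,
        Polynomial.map_C, Polynomial.map_X, map_ofNat, Polynomial.map_ofNat]
    rw [hmap]
    exact aux_f3b_irred

theorem aux_qQ1_irred :
    Irreducible (X ^ 4 + C 4 * X ^ 3 + C 16 * X ^ 2 + C 24 * X + C 16 : ℚ[X]) := by
  have hmon : (X ^ 4 + C 4 * X ^ 3 + C 16 * X ^ 2 + C 24 * X + C 16 : ℤ[X]).Monic := by
    monicity!
  have h := (hmon.irreducible_iff_irreducible_map_fraction_map (K := ℚ)).mp aux_qZ1_irred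
  have hmap : (X ^ 4 + C 4 * X ^ 3 + C 16 * X ^ 2 + C 24 * X + C 16 : ℤ[X]).map
      (algebraMap ℤ ℚ)
      = (X ^ 4 + C 4 * X ^ 3 + C 16 * X ^ 2 + C 24 * X + C 16 : ℚ[X]) := by
    simp only [Polynomial.map_add, Polynomial.map_mul, Polynomial.map_pow,
      Polynomial.map_C, Polynomial.map_X, map_ofNat, Polynomial.map_ofNat]
  rwa [hmap] at h

theorem aux_qQ2_irred :
    Irreducible (X ^ 4 + C 2 * X ^ 3 + C 4 * X ^ 2 - C 8 * X - C 16 : ℚ[X]) := by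
  have hmon : (X ^ 4 + C 2 * X ^ 3 + C 4 * X ^ 2 - C 8 * X - C 16 : ℤ[X]).Monic := by
    monicity!
  have h := (hmon.irreducible_iff_irreducible_map_fraction_map (K := ℚ)).mp aux_qZ2_irred
  have hmap : (X ^ 4 + C 2 * X ^ 3 + C 4 * X ^ 2 - C 8 * X - C 16 : ℤ[X]).map
      (algebraMap ℤ ℚ)
      = (X ^ 4 + C 2 * X ^ 3 + C 4 * X ^ 2 - C 8 * X - C 16 : ℚ[X]) := by
    simp only [Polynomial.map_sub, Polynomial.map_add, Polynomial.map_mul, Polynomial.map_pow,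
      Polynomial.map_C, Polynomial.map_X, map_ofNat, Polynomial.map_ofNat]
  rwa [hmap] at h

theorem aux_p1_irred : Irreducible
    (X ^ 4 + C (4 * MvPolynomial.X 0) * X ^ 3 + C (16 * MvPolynomial.X 0 ^ 2) * X ^ 2
      + C (24 * MvPolynomial.X 0 ^ 3) * X + C (16 * MvPolynomial.X 0 ^ 4)
      : Polynomial (MvPolynomial (Fin 1) ℚ)) := by
  apply Polynomial.Monic.irreducible_of_irreducible_map (MvPolynomial.eval (fun _ => (1 : ℚ)))
  · monicity!
  · have hmap : (X ^ 4 + C (4 * MvPolynomial.X 0) * X ^ 3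
        + C (16 * MvPolynomial.X 0 ^ 2) * X ^ 2
        + C (24 * MvPolynomial.X 0 ^ 3) * X + C (16 * MvPolynomial.X 0 ^ 4)
        : Polynomial (MvPolynomial (Fin 1) ℚ)).map (MvPolynomial.eval (fun _ => (1 : ℚ)))
        = (X ^ 4 + C 4 * X ^ 3 + C 16 * X ^ 2 + C 24 * X + C 16 : ℚ[X]) := by
      simp only [Polynomial.map_add, Polynomial.map_mul, Polynomial.map_pow,
        Polynomial.map_C, Polynomial.map_X, map_mul, map_pow, map_ofNat,
        MvPolynomial.eval_X, one_pow, mul_one, Polynomial.map_ofNat, Polynomial.C_1]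
    rw [hmap]
    exact aux_qQ1_irred

theorem aux_p2_irred : Irreducible
    (X ^ 4 + C (2 * MvPolynomial.X 0) * X ^ 3 + C (4 * MvPolynomial.X 0 ^ 2) * X ^ 2
      - C (8 * MvPolynomial.X 0 ^ 3) * X - C (16 * MvPolynomial.X 0 ^ 4)
      : Polynomial (MvPolynomial (Fin 1) ℚ)) := by
  apply Polynomial.Monic.irreducible_of_irreducible_map (MvPolynomial.eval (fun _ => (1 : ℚ)))
  · monicity!
  · have hmap : (X ^ 4 + C (2 * MvPolynomial.X 0) * X ^ 3
        + C (4 * MvPolynomial.X 0 ^ 2) * X ^ 2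
        - C (8 * MvPolynomial.X 0 ^ 3) * X - C (16 * MvPolynomial.X 0 ^ 4)
        : Polynomial (MvPolynomial (Fin 1) ℚ)).map (MvPolynomial.eval (fun _ => (1 : ℚ)))
        = (X ^ 4 + C 2 * X ^ 3 + C 4 * X ^ 2 - C 8 * X - C 16 : ℚ[X]) := by
      simp only [Polynomial.map_sub, Polynomial.map_add, Polynomial.map_mul, Polynomial.map_pow,
        Polynomial.map_C, Polynomial.map_X, map_mul, map_pow, map_ofNat,
        MvPolynomial.eval_X, one_pow, mul_one, Polynomial.map_ofNat, Polynomial.C_1]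
    rw [hmap]
    exact aux_qQ2_irred

end Aux

open MvPolynomial

theorem type_j_and_g_quartics_irreducible :
    Irreducible ((X 0) ^ 4 + 4 * (X 0) ^ 3 * X 1 + 16 * (X 0) ^ 2 * (X 1) ^ 2
        + 24 * X 0 * (X 1) ^ 3 + 16 * (X 1) ^ 4 :
      MvPolynomial (Fin 2) ℚ) ∧
    Irreducible ((X 0) ^ 4 + 2 * (X 0) ^ 3 * X 1 + 4 * (X 0) ^ 2 * (X 1) ^ 2
        - 8 * X 0 * (X 1) ^ 3 - 16 * (X 1) ^ 4 :
      MvPolynomial (Fin 2) ℚ) := by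
  have hX1 : (X 1 : MvPolynomial (Fin 2) ℚ) = X (Fin.succ 0) := rfl
  constructor
  · have he : (finSuccEquiv ℚ 1) ((X 0) ^ 4 + 4 * (X 0) ^ 3 * X 1 + 16 * (X 0) ^ 2 * (X 1) ^ 2
        + 24 * X 0 * (X 1) ^ 3 + 16 * (X 1) ^ 4 : MvPolynomial (Fin 2) ℚ)
        = (Polynomial.X ^ 4 + Polynomial.C (4 * X 0) * Polynomial.X ^ 3
          + Polynomial.C (16 * X 0 ^ 2) * Polynomial.X ^ 2
          + Polynomial.C (24 * X 0 ^ 3) * Polynomial.X + Polynomial.C (16 * X 0 ^ 4)) := by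
      rw [hX1]
      simp only [map_add, map_mul, map_pow, map_ofNat, finSuccEquiv_X_zero, finSuccEquiv_X_succ]
      ring
    have h : Irreducible ((finSuccEquiv ℚ 1) ((X 0) ^ 4 + 4 * (X 0) ^ 3 * X 1
        + 16 * (X 0) ^ 2 * (X 1) ^ 2 + 24 * X 0 * (X 1) ^ 3 + 16 * (X 1) ^ 4 :
        MvPolynomial (Fin 2) ℚ)) := by
      rw [he]
      exact aux_p1_irred
    exact (MulEquiv.irreducible_iff (finSuccEquiv ℚ 1)).mp h
  · have he : (finSuccEquiv ℚ 1) ((X 0) ^ 4 + 2 * (X 0) ^ 3 * X 1 + 4 * (X 0) ^ 2 * (X 1) ^ 2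
        - 8 * X 0 * (X 1) ^ 3 - 16 * (X 1) ^ 4 : MvPolynomial (Fin 2) ℚ)
        = (Polynomial.X ^ 4 + Polynomial.C (2 * X 0) * Polynomial.X ^ 3
          + Polynomial.C (4 * X 0 ^ 2) * Polynomial.X ^ 2
          - Polynomial.C (8 * X 0 ^ 3) * Polynomial.X - Polynomial.C (16 * X 0 ^ 4)) := by
      rw [hX1]
      simp only [map_sub, map_add, map_mul, map_pow, map_ofNat, finSuccEquiv_X_zero,
        finSuccEquiv_X_succ]
      ring
    have h : Irreducible ((finSuccEquiv ℚ 1) ((X 0) ^ 4 + 2 * (X 0) ^ 3 * X 1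
        + 4 * (X 0) ^ 2 * (X 1) ^ 2 - 8 * X 0 * (X 1) ^ 3 - 16 * (X 1) ^ 4 :
        MvPolynomial (Fin 2) ℚ)) := by
      rw [he]
      exact aux_p2_irred
    exact (MulEquiv.irreducible_iff (finSuccEquiv ℚ 1)).mp h
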